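/- The average primal sequence of Algorithm (DG) converges sublinearly at rate O(1/k): for all k ≥ 0, dist_K(G û^k + g) ≤ 2 L_G R_d / (k+1), and −(2 L_G R_d / (k+1))·(R_d + ‖x^0‖) ≤ f(û^k) − f* ≤ L_G ‖x^0‖² / (2(k+1)). -/

import Mathlib

open scoped RealInnerProductSpace
set_option maxHeartbeats 4000000

lemma pol1 {F : Type*} [NormedAddCommGroup F] [InnerProductSpace ℝ F] (a b c : F) :
    ⟪a - b, c - b⟫ = (‖a - b‖ ^ 2 + ‖c - b‖ ^ 2 - ‖a - c‖ ^ 2) / 2 := by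
  have h := norm_sub_sq_real (a - b) (c - b)
  have h2 : a - b - (c - b) = a - c := by abel
  rw [h2] at h
  linarith

lemma pol2 {F : Type*} [NormedAddCommGroup F] [InnerProductSpace ℝ F] (a b : F) :
    ⟪a - b, a⟫ = (‖a‖ ^ 2 - ‖b‖ ^ 2 + ‖a - b‖ ^ 2) / 2 := by
  have h := norm_sub_sq_real a b
  have h1 : ⟪a - b, a⟫ = ⟪a, a⟫ - ⟪b, a⟫ := inner_sub_left a b a
  have h2 : ⟪a, a⟫ = ‖a‖ ^ 2 := real_inner_self_eq_norm_sq a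
  have h3 : ⟪b, a⟫ = ⟪a, b⟫ := real_inner_comm a b
  linarith

lemma strong_min_aux {E : Type*} [NormedAddCommGroup E] [NormedSpace ℝ E]
    {σ : ℝ} {h : E → ℝ} {U : Set E} (hU : Convex ℝ U)
    (hsc : ∀ u ∈ U, ∀ v ∈ U, ∀ a b : ℝ, 0 ≤ a → 0 ≤ b → a + b = 1 →
      h (a • u + b • v) ≤ a * h u + b * h v - a * b * (σ / 2 * ‖u - v‖ ^ 2))
    {u₀ : E} (hu₀ : u₀ ∈ U) (hmin : ∀ u ∈ U, h u₀ ≤ h u)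
    {u : E} (hu : u ∈ U) : h u₀ + σ / 2 * ‖u - u₀‖ ^ 2 ≤ h u := by
  set c : ℝ := σ / 2 * ‖u - u₀‖ ^ 2 with hc
  set M : ℝ := h u - h u₀ with hM
  have hM0 : 0 ≤ M := by have := hmin u hu; rw [hM]; linarith
  have key : ∀ t : ℝ, 0 < t → t ≤ 1 → (1 - t) * c ≤ M := by
    intro t ht0 ht1
    have hcomb := hsc u₀ hu₀ u hu (1 - t) t (by linarith) (le_of_lt ht0) (by ring)
    have hmem : (1 - t) • u₀ + t • u ∈ U := hU hu₀ hu (by linarith) (le_of_lt ht0) (by ring)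
    have hge := hmin _ hmem
    have hnorm : ‖u₀ - u‖ = ‖u - u₀‖ := norm_sub_rev u₀ u
    rw [hnorm] at hcomb
    have h4 : t * ((1 - t) * c) ≤ t * M := by rw [hM, hc]; nlinarith [hcomb, hge]
    exact (mul_le_mul_iff_right₀ ht0).mp h4
  by_contra hcon
  push_neg at hcon
  have hMc : M < c := by rw [hM]; linarith
  have hc0 : 0 < c := lt_of_le_of_lt hM0 hMc
  have ht0 : 0 < (c - M) / (2 * c) := div_pos (by linarith) (by positivity)
  have := key ((c - M) / (2 * c)) ht0 (by rw [div_le_one (by positivity)]; linarith)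
  have hexp : (1 - (c - M) / (2 * c)) * c = c - (c - M) / 2 := by field_simp
  rw [hexp] at this
  linarith


lemma proj_VI {F : Type*} [NormedAddCommGroup F] [InnerProductSpace ℝ F] {C : Set F}
    (hC : Convex ℝ C) {P : F → F}
    (hP : ∀ z, P z ∈ C ∧ ∀ w ∈ C, ‖z - P z‖ ≤ ‖z - w‖) :
    ∀ z, ∀ w ∈ C, ⟪z - P z, w - P z⟫ ≤ 0 := by
  intro z
  have hp := hP z
  haveI : Nonempty ↑C := ⟨⟨P z, hp.1⟩⟩
  have heq : ‖z - P z‖ = ⨅ w : C, ‖z - w‖ := by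
    refine le_antisymm (le_ciInf fun w => hp.2 w w.2) ?_
    exact ciInf_le ⟨0, Set.forall_mem_range.2 fun _ => norm_nonneg _⟩ (⟨P z, hp.1⟩ : C)
  exact (norm_eq_iInf_iff_real_inner_le_zero hC hp.1).mp heq


lemma cone_proj {F : Type*} [NormedAddCommGroup F] [InnerProductSpace ℝ F] [CompleteSpace F]
    {C : Set F} (hne : C.Nonempty) (hcl : IsClosed C) (hcv : Convex ℝ C)
    (hcone : ∀ c : ℝ, 0 ≤ c → ∀ v ∈ C, c • v ∈ C) (v : F) :
    ∃ pv ∈ C, (∀ w ∈ C, ⟪v - pv, w⟫ ≤ 0) ∧ ⟪v - pv, pv⟫ = 0 := by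
  obtain ⟨pv, hpvK, hpveq⟩ := exists_norm_eq_iInf_of_complete_convex hne hcl.isComplete hcv v
  have hVI := (norm_eq_iInf_iff_real_inner_le_zero hcv hpvK).mp hpveq
  obtain ⟨w₀, hw₀⟩ := hne
  have h0C : (0 : F) ∈ C := by
    have := hcone 0 le_rfl w₀ hw₀
    rwa [zero_smul] at this
  have h2C : (2:ℝ) • pv ∈ C := hcone 2 (by norm_num) pv hpvK
  have hM : ⟪v - pv, pv⟫ = 0 := by
    have h0 := hVI 0 h0C
    have h2 := hVI ((2:ℝ) • pv) h2C
    have he2 : (2:ℝ) • pv - pv = pv := by rw [two_smul]; abel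
    rw [he2] at h2
    rw [zero_sub, inner_neg_right] at h0
    linarith
  refine ⟨pv, hpvK, ?_, hM⟩
  intro w hw
  have := hVI w hw
  rw [inner_sub_right, hM] at this
  linarith

theorem stmt_6 {n p : ℕ}
    (f : EuclideanSpace ℝ (Fin n) → ℝ) (σf : ℝ) (hσf : 0 < σf)
    (hfc : Continuous f) (hfsc : StrongConvexOn Set.univ σf f)
    (U : Set (EuclideanSpace ℝ (Fin n))) (hUne : U.Nonempty) (hUcl : IsClosed U) (hUcv : Convex ℝ U)
    (G : EuclideanSpace ℝ (Fin n) →L[ℝ] EuclideanSpace ℝ (Fin p)) (hG : G ≠ 0) (g : EuclideanSpace ℝ (Fin p))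
    (K : Set (EuclideanSpace ℝ (Fin p))) (hKne : K.Nonempty) (hKcl : IsClosed K) (hKcv : Convex ℝ K)
    (hKcone : ∀ c : ℝ, 0 ≤ c → ∀ v ∈ K, c • v ∈ K)
    (Kstar : Set (EuclideanSpace ℝ (Fin p)))
    (hKstar : Kstar = {x : EuclideanSpace ℝ (Fin p) | ∀ v ∈ K, 0 ≤ ⟪x, v⟫})
    (Lag : EuclideanSpace ℝ (Fin n) → EuclideanSpace ℝ (Fin p) → ℝ)
    (hLag : ∀ u x, Lag u x = f u + ⟪x, -(G u) - g⟫)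
    (uu : EuclideanSpace ℝ (Fin p) → EuclideanSpace ℝ (Fin n))
    (huu : ∀ x : EuclideanSpace ℝ (Fin p), uu x ∈ U ∧ ∀ u ∈ U, Lag (uu x) x ≤ Lag u x)
    (d : EuclideanSpace ℝ (Fin p) → ℝ) (hd : ∀ x, d x = Lag (uu x) x)
    (ustar : EuclideanSpace ℝ (Fin n))
    (hustar : ustar ∈ U ∧ G ustar + g ∈ K ∧ ∀ u ∈ U, G u + g ∈ K → f ustar ≤ f u)
    (fstar : ℝ) (hfstar : fstar = f ustar)
    (Xstar : Set (EuclideanSpace ℝ (Fin p))) (hXstar : Xstar = {x ∈ Kstar | d x = fstar})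
    (hXne : Xstar.Nonempty)
    (Ld : ℝ) (hLd : Ld = ‖G‖ ^ 2 / σf)
    (projKs : EuclideanSpace ℝ (Fin p) → EuclideanSpace ℝ (Fin p))
    (hprojKs : ∀ z : EuclideanSpace ℝ (Fin p), projKs z ∈ Kstar ∧ ∀ w ∈ Kstar, ‖z - projKs z‖ ≤ ‖z - w‖)
    (LG : ℝ) (hLG : Ld ≤ LG) (α : ℕ → ℝ)
    (hα : ∀ k, 1 / LG ≤ α k ∧ α k ≤ 1 / Ld)
    (x : ℕ → EuclideanSpace ℝ (Fin p)) (hx0K : x 0 ∈ Kstar)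
    (hxrec : ∀ k, x (k + 1) = projKs (x k + α k • (-(G (uu (x k))) - g)))
    (xstar : EuclideanSpace ℝ (Fin p)) (hxstar : xstar ∈ Xstar)
    (hxstarmin : ∀ z ∈ Xstar, ‖x 0 - xstar‖ ≤ ‖x 0 - z‖)
    (Rd : ℝ) (hRd : Rd = ‖x 0 - xstar‖)
    (S : ℕ → ℝ) (hS : ∀ k, S k = ∑ j ∈ Finset.range (k + 1), α j)
    (uhat : ℕ → EuclideanSpace ℝ (Fin n))
    (huhat : ∀ k, uhat k = (S k)⁻¹ • ∑ j ∈ Finset.range (k + 1), α j • uu (x j))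
 :
    ∀ k : ℕ,
      Metric.infDist (G (uhat k) + g) K ≤ 2 * LG * Rd / ((k : ℝ) + 1) ∧
      -(2 * LG * Rd / ((k : ℝ) + 1) * (Rd + ‖x 0‖)) ≤ f (uhat k) - fstar ∧
      f (uhat k) - fstar ≤ LG * ‖x 0‖ ^ 2 / (2 * ((k : ℝ) + 1)) := by
  -- ===== basic positivity =====
  have hGn : (0:ℝ) < ‖G‖ := norm_pos_iff.mpr hG
  have hLd0 : 0 < Ld := by rw [hLd]; positivity
  have hLG0 : 0 < LG := lt_of_lt_of_le hLd0 hLG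
  have hα0 : ∀ j, 0 < α j := fun j => lt_of_lt_of_le (by positivity) (hα j).1
  have hαLd : ∀ j, Ld * α j ≤ 1 := by
    intro j
    have h2 := (hα j).2
    rw [le_div_iff₀ hLd0] at h2
    linarith
  -- ===== Kstar facts =====
  have hKs0 : (0 : EuclideanSpace ℝ (Fin p)) ∈ Kstar := by
    rw [hKstar]; intro v hv; simp
  have hKsmem : ∀ z ∈ Kstar, ∀ v ∈ K, 0 ≤ ⟪z, v⟫ := by
    intro z hz; rw [hKstar] at hz; exact hz
  have hKsadd : ∀ a ∈ Kstar, ∀ b ∈ Kstar, a + b ∈ Kstar := by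
    intro a ha b hb; rw [hKstar] at ha hb ⊢
    intro v hv
    have := ha v hv; have := hb v hv
    rw [inner_add_left]; linarith
  have hKssmul : ∀ (c : ℝ), 0 ≤ c → ∀ a ∈ Kstar, c • a ∈ Kstar := by
    intro c hc a ha; rw [hKstar] at ha ⊢
    intro v hv
    rw [real_inner_smul_left]
    exact mul_nonneg hc (ha v hv)
  have hKscv : Convex ℝ Kstar := by
    intro a ha b hb s t hs ht hst
    exact hKsadd _ (hKssmul s hs a ha) _ (hKssmul t ht b hb)
  have hxK : ∀ j, x j ∈ Kstar := by
    intro j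
    cases j with
    | zero => exact hx0K
    | succ j => rw [hxrec j]; exact (hprojKs _).1
  -- ===== projection facts =====
  have hVI : ∀ z : EuclideanSpace ℝ (Fin p), ∀ w ∈ Kstar, ⟪z - projKs z, w - projKs z⟫ ≤ 0 :=
    proj_VI hKscv hprojKs
  have hMoreau : ∀ z : EuclideanSpace ℝ (Fin p), ⟪z - projKs z, projKs z⟫ = 0 := by
    intro z
    have h0 := hVI z 0 hKs0
    have h2 := hVI z ((2:ℝ) • projKs z) (hKssmul 2 (by norm_num) _ (hprojKs z).1)
    have he2 : (2:ℝ) • projKs z - projKs z = projKs z := by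
      rw [two_smul]; abel
    rw [he2] at h2
    rw [zero_sub, inner_neg_right] at h0
    linarith
  have hVI' : ∀ z : EuclideanSpace ℝ (Fin p), ∀ w ∈ Kstar, ⟪z - projKs z, w⟫ ≤ 0 := by
    intro z w hw
    have := hVI z w hw
    rw [inner_sub_right, hMoreau z] at this
    linarith
  -- ===== dual function facts =====
  have hdval : ∀ y, d y = f (uu y) + ⟪y, -(G (uu y)) - g⟫ := by
    intro y; rw [hd, hLag]
  have hconc : ∀ y z, d z ≤ d y + ⟪z - y, -(G (uu y)) - g⟫ := by
    intro y z
    have h1 : d z ≤ Lag (uu y) z := by rw [hd]; exact (huu z).2 _ (huu y).1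
    rw [hLag] at h1
    rw [hdval y]
    have h2 : ⟪z - y, -(G (uu y)) - g⟫ = ⟪z, -(G (uu y)) - g⟫ - ⟪y, -(G (uu y)) - g⟫ :=
      inner_sub_left _ _ _
    linarith
  have hLagsc : ∀ y, ∀ u ∈ U, ∀ v ∈ U, ∀ a b : ℝ, 0 ≤ a → 0 ≤ b → a + b = 1 →
      Lag (a • u + b • v) y ≤ a * Lag u y + b * Lag v y - a * b * (σf / 2 * ‖u - v‖ ^ 2) := by
    intro y u hu v hv a b ha hb hab
    have hf1 := hfsc.2 (Set.mem_univ u) (Set.mem_univ v) ha hb hab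
    simp only [smul_eq_mul] at hf1
    have hb' : b = 1 - a := by linarith
    subst hb'
    have hlin : -(G (a • u + (1-a) • v)) - g = a • (-(G u) - g) + (1-a) • (-(G v) - g) := by
      rw [map_add, map_smul, map_smul]
      module
    rw [hLag, hLag, hLag, hlin, inner_add_right, real_inner_smul_right, real_inner_smul_right]
    nlinarith [hf1]
  have hsmin : ∀ y, ∀ u ∈ U, Lag (uu y) y + σf / 2 * ‖u - uu y‖ ^ 2 ≤ Lag u y := by
    intro y u hu
    exact strong_min_aux (h := fun w => Lag w y) hUcv (hLagsc y) (huu y).1 (fun w hw => (huu y).2 w hw) hu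
  have hdesc : ∀ y z, d y + ⟪z - y, -(G (uu y)) - g⟫ - Ld / 2 * ‖z - y‖ ^ 2 ≤ d z := by
    intro y z
    have h1 : Lag (uu y) y + σf / 2 * ‖uu z - uu y‖ ^ 2 ≤ Lag (uu z) y := hsmin y _ (huu z).1
    have h2 : d z = Lag (uu z) y + ⟪z - y, -(G (uu z)) - g⟫ := by
      rw [hd, hLag, hLag, inner_sub_left]; ring
    have h3 : ⟪z - y, -(G (uu z)) - g⟫
        = ⟪z - y, -(G (uu y)) - g⟫ + ⟪z - y, G (uu y) - G (uu z)⟫ := by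
      rw [← inner_add_right]
      congr 1
      abel
    have h4 : |⟪z - y, G (uu y) - G (uu z)⟫| ≤ ‖z - y‖ * ‖G (uu y) - G (uu z)‖ :=
      abs_real_inner_le_norm _ _
    have h5 : ‖G (uu y) - G (uu z)‖ ≤ ‖G‖ * ‖uu z - uu y‖ := by
      rw [← map_sub]
      calc ‖G (uu y - uu z)‖ ≤ ‖G‖ * ‖uu y - uu z‖ := G.le_opNorm _
        _ = ‖G‖ * ‖uu z - uu y‖ := by rw [norm_sub_rev]
    have h6 : -(‖z - y‖ * (‖G‖ * ‖uu z - uu y‖)) ≤ ⟪z - y, G (uu y) - G (uu z)⟫ := by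
      have hna := neg_abs_le ⟪z - y, G (uu y) - G (uu z)⟫
      have hmul : ‖z - y‖ * ‖G (uu y) - G (uu z)‖ ≤ ‖z - y‖ * (‖G‖ * ‖uu z - uu y‖) :=
        mul_le_mul_of_nonneg_left h5 (norm_nonneg _)
      linarith
    have h7 : - (Ld / 2 * ‖z - y‖ ^ 2) ≤ σf / 2 * ‖uu z - uu y‖ ^ 2
        - ‖z - y‖ * (‖G‖ * ‖uu z - uu y‖) := by
      rw [hLd]
      have hGs : ‖G‖ ^ 2 / σf * σf = ‖G‖ ^ 2 := div_mul_cancel₀ _ (ne_of_gt hσf)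
      nlinarith [sq_nonneg (σf * ‖uu z - uu y‖ - ‖G‖ * ‖z - y‖), hσf]
    have hdy : d y = Lag (uu y) y := hd y
    linarith
  have hwd : ∀ y ∈ Kstar, d y ≤ fstar := by
    intro y hy
    have h1 : d y ≤ Lag ustar y := by rw [hd]; exact (huu y).2 _ hustar.1
    rw [hLag] at h1
    have h2 : -(G ustar) - g = -(G ustar + g) := by abel
    rw [h2, inner_neg_right] at h1
    have h3 : 0 ≤ ⟪y, G ustar + g⟫ := hKsmem y hy _ hustar.2.1
    rw [hfstar]
    linarith
  have hxstarKs : xstar ∈ Kstar := by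
    rw [hXstar] at hxstar; exact hxstar.1
  have hdxstar : d xstar = fstar := by
    rw [hXstar] at hxstar; exact hxstar.2
  -- ===== per-step inequalities =====
  have hdjm : ∀ j, α j * d (x j) + α j * ⟪x (j+1) - x j, -(G (uu (x j))) - g⟫
      - 1 / 2 * ‖x (j+1) - x j‖ ^ 2 ≤ α j * d (x (j+1)) := by
    intro j
    have h1 := hdesc (x j) (x (j+1))
    have h2 := mul_le_mul_of_nonneg_left h1 (hα0 j).le
    have h3 : 0 ≤ (1 - Ld * α j) * ‖x (j+1) - x j‖ ^ 2 :=
      mul_nonneg (by linarith [hαLd j]) (sq_nonneg _)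
    nlinarith [h2, h3]
  have hstepA : ∀ j, ∀ z ∈ Kstar,
      α j * d z + 1 / 2 * (‖x (j+1) - z‖ ^ 2 - ‖x j - z‖ ^ 2) ≤ α j * d (x (j+1)) := by
    intro j z hz
    have h1 := hdjm j
    have h2 := mul_le_mul_of_nonneg_left (hconc (x j) z) (hα0 j).le
    have h3 := hVI (x j + α j • (-(G (uu (x j))) - g)) z hz
    rw [← hxrec j] at h3
    have hq : x j + α j • (-(G (uu (x j))) - g) - x (j+1)
        = (x j - x (j+1)) + α j • (-(G (uu (x j))) - g) := by abel
    rw [hq, inner_add_left, real_inner_smul_left] at h3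
    have h4 : ⟪x j - x (j+1), z - x (j+1)⟫
        = (‖x j - x (j+1)‖ ^ 2 + ‖z - x (j+1)‖ ^ 2 - ‖x j - z‖ ^ 2) / 2 := pol1 _ _ _
    have h5 : α j * ⟪z - x j, -(G (uu (x j))) - g⟫
        = α j * (⟪z - x (j+1), -(G (uu (x j))) - g⟫
          + ⟪x (j+1) - x j, -(G (uu (x j))) - g⟫) := by
      rw [← inner_add_left]
      congr 2
      abel
    have h6 : ⟪-(G (uu (x j))) - g, z - x (j+1)⟫ = ⟪z - x (j+1), -(G (uu (x j))) - g⟫ :=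
      real_inner_comm _ _
    have h7 : ‖x (j+1) - z‖ = ‖z - x (j+1)‖ := norm_sub_rev _ _
    rw [h7]
    rw [h6] at h3
    have h14 : ‖x j - x (j+1)‖ ^ 2 = ‖x (j+1) - x j‖ ^ 2 := by rw [norm_sub_rev]
    nlinarith [h1, h2, h3, h4, h5, h14]
  have hstepB : ∀ j, ∀ z ∈ Kstar,
      α j * ⟪z, -(G (uu (x j))) - g⟫ ≤ ⟪z, x (j+1) - x j⟫ := by
    intro j z hz
    have h3 := hVI' (x j + α j • (-(G (uu (x j))) - g)) z hz
    rw [← hxrec j] at h3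
    have hq : x j + α j • (-(G (uu (x j))) - g) - x (j+1)
        = (x j - x (j+1)) + α j • (-(G (uu (x j))) - g) := by abel
    rw [hq, inner_add_left, real_inner_smul_left] at h3
    have h5 : ⟪z, x (j+1) - x j⟫ = -⟪z, x j - x (j+1)⟫ := by
      rw [← inner_neg_right]
      congr 1
      abel
    have h6 : ⟪z, x j - x (j+1)⟫ = ⟪x j - x (j+1), z⟫ := real_inner_comm _ _
    have h7 : ⟪-(G (uu (x j))) - g, z⟫ = ⟪z, -(G (uu (x j))) - g⟫ := real_inner_comm _ _
    rw [h7] at h3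
    linarith
  have hstepC : ∀ j, α j * f (uu (x j))
      ≤ α j * fstar + 1 / 2 * (‖x j‖ ^ 2 - ‖x (j+1)‖ ^ 2) := by
    intro j
    have h1 := hdjm j
    have h8 : α j * d (x j)
        = α j * (f (uu (x j)) + ⟪x j, -(G (uu (x j))) - g⟫) := by rw [hdval]
    have h9 : α j * ⟪x (j+1) - x j, -(G (uu (x j))) - g⟫
        = α j * (⟪x (j+1), -(G (uu (x j))) - g⟫ - ⟪x j, -(G (uu (x j))) - g⟫) := by
      rw [inner_sub_left]
    have hM := hMoreau (x j + α j • (-(G (uu (x j))) - g))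
    rw [← hxrec j] at hM
    have hq : x j + α j • (-(G (uu (x j))) - g) - x (j+1)
        = (x j - x (j+1)) + α j • (-(G (uu (x j))) - g) := by abel
    rw [hq, inner_add_left, real_inner_smul_left] at hM
    have h10 : ⟪x j - x (j+1), x (j+1)⟫ = -⟪x (j+1) - x j, x (j+1)⟫ := by
      rw [← inner_neg_left]
      congr 1
      abel
    have h11 : ⟪x (j+1) - x j, x (j+1)⟫
        = (‖x (j+1)‖ ^ 2 - ‖x j‖ ^ 2 + ‖x (j+1) - x j‖ ^ 2) / 2 := pol2 _ _
    have h12 : ⟪-(G (uu (x j))) - g, x (j+1)⟫ = ⟪x (j+1), -(G (uu (x j))) - g⟫ :=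
      real_inner_comm _ _
    rw [h10, h11, h12] at hM
    have h13 : α j * d (x (j+1)) ≤ α j * fstar :=
      mul_le_mul_of_nonneg_left (hwd _ (hxK (j+1))) (hα0 j).le
    nlinarith [h1, h8, h9, hM, h13]
  -- ===== Fejer monotonicity =====
  have hfej : ∀ j, ‖x (j+1) - xstar‖ ≤ ‖x j - xstar‖ := by
    intro j
    have h1 := hstepA j xstar hxstarKs
    have h2 : α j * d (x (j+1)) ≤ α j * fstar :=
      mul_le_mul_of_nonneg_left (hwd _ (hxK (j+1))) (hα0 j).le
    rw [hdxstar] at h1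
    have hsq : ‖x (j+1) - xstar‖ ^ 2 ≤ ‖x j - xstar‖ ^ 2 := by linarith
    nlinarith [norm_nonneg (x (j+1) - xstar), norm_nonneg (x j - xstar), hsq]
  have hfejR : ∀ j, ‖x j - xstar‖ ≤ Rd := by
    intro j
    induction j with
    | zero => rw [hRd]
    | succ j ih => exact le_trans (hfej j) ih
  -- ===== summation stage =====
  intro k
  have hSk : S k = ∑ j ∈ Finset.range (k + 1), α j := hS k
  have hk1 : (0:ℝ) < (k:ℝ) + 1 := by positivity
  have hSlb : ((k : ℝ) + 1) / LG ≤ S k := by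
    rw [hSk]
    have hle : ∀ j ∈ Finset.range (k+1), 1 / LG ≤ α j := fun j _ => (hα j).1
    calc ((k : ℝ) + 1) / LG = ∑ _j ∈ Finset.range (k+1), 1 / LG := by
          rw [Finset.sum_const, Finset.card_range]; push_cast; ring
      _ ≤ ∑ j ∈ Finset.range (k+1), α j := Finset.sum_le_sum hle
  have hSpos : 0 < S k := lt_of_lt_of_le (by positivity) hSlb
  have hRd0 : 0 ≤ Rd := by rw [hRd]; exact norm_nonneg _
  have hsum_u : ∑ j ∈ Finset.range (k + 1), α j • uu (x j) = S k • uhat k := by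
    rw [huhat k, smul_inv_smul₀ (ne_of_gt hSpos)]
  have hsumD : (∑ j ∈ Finset.range (k + 1), α j • (-(G (uu (x j))) - g))
      = -(S k • (G (uhat k) + g)) := by
    have h1 : ∀ j, α j • (-(G (uu (x j))) - g) = -(G (α j • uu (x j))) - α j • g := by
      intro j
      rw [map_smul, smul_sub, smul_neg]
    calc (∑ j ∈ Finset.range (k + 1), α j • (-(G (uu (x j))) - g))
        = ∑ j ∈ Finset.range (k + 1), (-(G (α j • uu (x j))) - α j • g) :=
          Finset.sum_congr rfl fun j _ => h1 j
      _ = -(G (∑ j ∈ Finset.range (k + 1), α j • uu (x j)))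
            - (∑ j ∈ Finset.range (k+1), α j) • g := by
          rw [Finset.sum_sub_distrib, Finset.sum_neg_distrib, ← map_sum, Finset.sum_smul]
      _ = -(S k • (G (uhat k) + g)) := by
          rw [hsum_u, ← hSk, map_smul, smul_add]
          abel
  have hconvf : ConvexOn ℝ Set.univ f :=
    hfsc.convexOn (by intro r; simp only [Pi.zero_apply]; positivity)
  have huhat_eq : uhat k = ∑ j ∈ Finset.range (k+1), (α j / S k) • uu (x j) := by
    rw [huhat k, Finset.smul_sum]
    exact Finset.sum_congr rfl fun j _ => by rw [smul_smul, div_eq_inv_mul]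
  have hw0 : ∀ j ∈ Finset.range (k+1), 0 ≤ α j / S k :=
    fun j _ => le_of_lt (div_pos (hα0 j) hSpos)
  have hw1 : ∑ j ∈ Finset.range (k+1), α j / S k = 1 := by
    rw [← Finset.sum_div, ← hSk, div_self (ne_of_gt hSpos)]
  have huhatU : uhat k ∈ U := by
    rw [huhat_eq]
    exact hUcv.sum_mem hw0 hw1 (fun j _ => (huu (x j)).1)
  have hjensen : f (uhat k) ≤ ∑ j ∈ Finset.range (k+1), (α j / S k) * f (uu (x j)) := by
    rw [huhat_eq]
    exact hconvf.map_sum_le hw0 hw1 (fun j _ => Set.mem_univ _)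
  have htel : ∑ j ∈ Finset.range (k+1), (‖x j‖ ^ 2 - ‖x (j+1)‖ ^ 2)
      = ‖x 0‖ ^ 2 - ‖x (k+1)‖ ^ 2 := Finset.sum_range_sub' (fun i => ‖x i‖ ^ 2) (k+1)
  have hsumC : ∑ j ∈ Finset.range (k+1), α j * f (uu (x j))
      ≤ S k * fstar + 1/2 * ‖x 0‖ ^ 2 := by
    have h1 : ∑ j ∈ Finset.range (k+1), α j * f (uu (x j))
        ≤ ∑ j ∈ Finset.range (k+1), (α j * fstar + 1/2 * (‖x j‖ ^ 2 - ‖x (j+1)‖ ^ 2)) :=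
      Finset.sum_le_sum fun j _ => hstepC j
    rw [Finset.sum_add_distrib, ← Finset.sum_mul, ← hSk, ← Finset.mul_sum, htel] at h1
    nlinarith [sq_nonneg ‖x (k+1)‖]
  have hupper : f (uhat k) - fstar ≤ LG * ‖x 0‖ ^ 2 / (2 * ((k:ℝ) + 1)) := by
    have h2 : f (uhat k) ≤ (∑ j ∈ Finset.range (k+1), α j * f (uu (x j))) / S k := by
      rw [Finset.sum_div]
      refine le_trans hjensen (le_of_eq (Finset.sum_congr rfl fun j _ => ?_))
      ring
    have h3 : (∑ j ∈ Finset.range (k+1), α j * f (uu (x j))) / S k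
        ≤ fstar + (1/2 * ‖x 0‖ ^ 2) / S k := by
      rw [div_le_iff₀ hSpos]
      have hexp : (fstar + 1/2 * ‖x 0‖ ^ 2 / S k) * S k = S k * fstar + 1/2 * ‖x 0‖ ^ 2 := by
        field_simp
      rw [hexp]
      exact hsumC
    have h4 : 1 / S k ≤ LG / ((k:ℝ)+1) := by
      rw [div_le_div_iff₀ hSpos hk1]
      rw [div_le_iff₀ hLG0] at hSlb
      linarith
    have h5 : (1/2 * ‖x 0‖ ^ 2) / S k = (1/2 * ‖x 0‖ ^ 2) * (1 / S k) := by ring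
    have h6 : (1/2 * ‖x 0‖ ^ 2) * (1 / S k) ≤ (1/2 * ‖x 0‖ ^ 2) * (LG / ((k:ℝ)+1)) :=
      mul_le_mul_of_nonneg_left h4 (by positivity)
    have h7 : (1/2 * ‖x 0‖ ^ 2) * (LG / ((k:ℝ)+1)) = LG * ‖x 0‖ ^ 2 / (2 * ((k:ℝ)+1)) := by
      field_simp
    linarith
  -- ===== residual bound =====
  obtain ⟨pv, hpvK, hpvw, hpvM⟩ := cone_proj hKne hKcl hKcv hKcone (G (uhat k) + g)
  have hz0Ks : pv - (G (uhat k) + g) ∈ Kstar := by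
    rw [hKstar]
    intro w hw
    have h1 := hpvw w hw
    have heq : pv - (G (uhat k) + g) = -((G (uhat k) + g) - pv) := by abel
    rw [heq, inner_neg_left]
    linarith
  have hz0v : ⟪pv - (G (uhat k) + g), -(G (uhat k) + g)⟫
      = ‖(G (uhat k) + g) - pv‖ ^ 2 := by
    have h1 : ⟪pv - (G (uhat k) + g), -(G (uhat k) + g)⟫
        = ⟪(G (uhat k) + g) - pv, G (uhat k) + g⟫ := by
      rw [show pv - (G (uhat k) + g) = -((G (uhat k) + g) - pv) from by abel,
        inner_neg_left, inner_neg_right, neg_neg]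
    have h2 := inner_sub_right (𝕜 := ℝ) ((G (uhat k) + g) - pv) (G (uhat k) + g) pv
    have h3 := real_inner_self_eq_norm_sq ((G (uhat k) + g) - pv)
    rw [h1]
    linarith [hpvM]
  have hsumB : ∀ z ∈ Kstar, S k * ⟪z, -(G (uhat k) + g)⟫ ≤ ⟪z, x (k+1) - x 0⟫ := by
    intro z hz
    have h1 : ∑ j ∈ Finset.range (k+1), α j * ⟪z, -(G (uu (x j))) - g⟫
        ≤ ∑ j ∈ Finset.range (k+1), ⟪z, x (j+1) - x j⟫ :=
      Finset.sum_le_sum fun j _ => hstepB j z hz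
    have h2 : ∑ j ∈ Finset.range (k+1), ⟪z, x (j+1) - x j⟫ = ⟪z, x (k+1) - x 0⟫ := by
      have he : ∀ j, ⟪z, x (j+1) - x j⟫ = ⟪z, x (j+1)⟫ - ⟪z, x j⟫ :=
        fun j => inner_sub_right _ _ _
      rw [Finset.sum_congr rfl fun j _ => he j,
        Finset.sum_range_sub (fun i => ⟪z, x i⟫), ← inner_sub_right]
    have h3 : ∑ j ∈ Finset.range (k+1), α j * ⟪z, -(G (uu (x j))) - g⟫
        = S k * ⟪z, -(G (uhat k) + g)⟫ := by
      have h4 : ∀ j ∈ Finset.range (k+1),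
          α j * ⟪z, -(G (uu (x j))) - g⟫ = ⟪z, α j • (-(G (uu (x j))) - g)⟫ :=
        fun j _ => (real_inner_smul_right z _ (α j)).symm
      rw [Finset.sum_congr rfl h4, ← inner_sum, hsumD, inner_neg_right,
        real_inner_smul_right, inner_neg_right]
      ring
    linarith [h1, h2, h3]
  have hxx : ‖x (k+1) - x 0‖ ≤ 2 * Rd := by
    have h1 : ‖x (k+1) - x 0‖ ≤ ‖x (k+1) - xstar‖ + ‖xstar - x 0‖ :=
      norm_sub_le_norm_sub_add_norm_sub _ _ _
    have h2 : ‖xstar - x 0‖ = Rd := by rw [norm_sub_rev, ← hRd]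
    linarith [hfejR (k+1)]
  have hNb : ‖(G (uhat k) + g) - pv‖ ≤ 2 * LG * Rd / ((k:ℝ)+1) := by
    have h1 := hsumB _ hz0Ks
    rw [hz0v] at h1
    have h2 : ⟪pv - (G (uhat k) + g), x (k+1) - x 0⟫
        ≤ ‖(G (uhat k) + g) - pv‖ * (2 * Rd) := by
      have hc := real_inner_le_norm (pv - (G (uhat k) + g)) (x (k+1) - x 0)
      have hnrm : ‖pv - (G (uhat k) + g)‖ = ‖(G (uhat k) + g) - pv‖ := norm_sub_rev _ _
      rw [hnrm] at hc
      nlinarith [norm_nonneg ((G (uhat k) + g) - pv), hxx, hc]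
    rcases eq_or_lt_of_le (norm_nonneg ((G (uhat k) + g) - pv)) with h0 | h0
    · rw [← h0]
      exact div_nonneg (by nlinarith [hRd0, hLG0]) hk1.le
    · have h3 : S k * ‖(G (uhat k) + g) - pv‖ ≤ 2 * Rd := by
        have h4 : (S k * ‖(G (uhat k) + g) - pv‖) * ‖(G (uhat k) + g) - pv‖
            ≤ (2 * Rd) * ‖(G (uhat k) + g) - pv‖ := by nlinarith [h1, h2]
        exact le_of_mul_le_mul_right h4 h0
      have hk2 : (k:ℝ) + 1 ≤ LG * S k := by
        rw [div_le_iff₀ hLG0] at hSlb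
        linarith
      rw [le_div_iff₀ hk1]
      have f1 : ‖(G (uhat k) + g) - pv‖ * ((k:ℝ)+1)
          ≤ ‖(G (uhat k) + g) - pv‖ * (LG * S k) :=
        mul_le_mul_of_nonneg_left hk2 (norm_nonneg _)
      have f2 : LG * (S k * ‖(G (uhat k) + g) - pv‖) ≤ LG * (2 * Rd) :=
        mul_le_mul_of_nonneg_left h3 hLG0.le
      nlinarith [f1, f2]
  have hdist : Metric.infDist (G (uhat k) + g) K ≤ ‖(G (uhat k) + g) - pv‖ := by
    have h1 := Metric.infDist_le_dist_of_mem (x := G (uhat k) + g) hpvK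
    rwa [dist_eq_norm] at h1
  have hlow : -(2 * LG * Rd / ((k:ℝ)+1) * (Rd + ‖x 0‖)) ≤ f (uhat k) - fstar := by
    have h1 : fstar ≤ Lag (uhat k) xstar := by
      rw [← hdxstar, hd]
      exact (huu xstar).2 _ huhatU
    rw [hLag] at h1
    have h2 : ⟪xstar, -(G (uhat k)) - g⟫ = -⟪xstar, G (uhat k) + g⟫ := by
      rw [← inner_neg_right]
      congr 1
      abel
    rw [h2] at h1
    have h3 : 0 ≤ ⟪xstar, pv⟫ := hKsmem xstar hxstarKs pv hpvK
    have h4 : ⟪xstar, G (uhat k) + g⟫ = ⟪xstar, pv⟫ + ⟪xstar, (G (uhat k) + g) - pv⟫ := by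
      rw [← inner_add_right]
      congr 1
      abel
    have h5 : |⟪xstar, (G (uhat k) + g) - pv⟫| ≤ ‖xstar‖ * ‖(G (uhat k) + g) - pv‖ :=
      abs_real_inner_le_norm _ _
    have h6 : ‖xstar‖ ≤ Rd + ‖x 0‖ := by
      have hb : ‖xstar‖ = ‖x 0 - (x 0 - xstar)‖ := by congr 1; abel
      have hc : ‖x 0 - (x 0 - xstar)‖ ≤ ‖x 0‖ + ‖x 0 - xstar‖ := norm_sub_le _ _
      rw [hRd]
      linarith
    have h7 : ‖xstar‖ * ‖(G (uhat k) + g) - pv‖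
        ≤ (Rd + ‖x 0‖) * (2 * LG * Rd / ((k:ℝ)+1)) :=
      mul_le_mul h6 hNb (norm_nonneg _) (by linarith [norm_nonneg (x 0)])
    have h8 := neg_abs_le ⟪xstar, (G (uhat k) + g) - pv⟫
    nlinarith [h1, h3, h4, h5, h7, h8]
  exact ⟨le_trans hdist hNb, hlow, hupper⟩
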